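/- Riccati comparison: let G be continuous and v continuous and positive on [0,∞). Suppose q₁ is absolutely continuous on [t̄, T₁) and satisfies q₁'(t) − q₁(t)²/v(t) − G(t) ≥ 0 a.e., and q₂ is absolutely continuous on [t̄, T₂) and satisfies q₂'(t) − q₂(t)²/v(t) − G(t) ≤ 0 a.e., with q₁(t̄) = q₂(t̄) for some t̄ > 0 (and T₁, T₂ the maximal right endpoints of their intervals of definition). Then T₁ ≤ T₂ and q₁(t) ≥ q₂(t) for all t ∈ [t̄, T₁). -/

import Mathlib

open Real Set Filter MeasureTheory intervalIntegral
open Topology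

/-- Goldowsky–Tonelli: an everywhere (within-)differentiable function on `[a,b]` whose
derivative is nonnegative off a null set is nondecreasing. -/
lemma gt_aux {g g' : ℝ → ℝ} {a b : ℝ} (hab : a ≤ b)
    (hdiff : ∀ x ∈ Icc a b, HasDerivWithinAt g (g' x) (Icc a b) x)
    {E : Set ℝ} (hE : volume E = 0)
    (hpos : ∀ x ∈ Icc a b, x ∉ E → 0 ≤ g' x) : g a ≤ g b := by
  by_contra hba
  push_neg at hba
  have hcont : ContinuousOn g (Icc a b) := fun x hx => (hdiff x hx).continuousWithinAt
  -- image of the null exceptional set is null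
  have h1 : volume (g '' (E ∩ Icc a b)) = 0 := by
    apply addHaar_image_eq_zero_of_differentiableOn_of_addHaar_eq_zero (volume : Measure ℝ)
    · intro x hx
      exact ((hdiff x hx.2).mono inter_subset_right).differentiableWithinAt
    · exact measure_mono_null inter_subset_left hE
  -- image of the zero-derivative set is null (Sard)
  have h2 : volume (g '' {x ∈ Icc a b | g' x = 0}) = 0 := by
    apply addHaar_image_eq_zero_of_det_fderivWithin_eq_zero (volume : Measure ℝ)
      (f' := fun x => (1 : ℝ →L[ℝ] ℝ).smulRight (g' x))
    · intro x hx
      exact ((hdiff x hx.1).mono (sep_subset _ _)).hasFDerivWithinAt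
    · intro x hx
      rw [ContinuousLinearMap.det_smulRight, hx.2]; simp
  -- every intermediate value is attained at a point of one of these two sets
  have hsub : Ioo (g b) (g a) ⊆ g '' (E ∩ Icc a b) ∪ g '' {x ∈ Icc a b | g' x = 0} := by
    intro y hy
    have hy' : y ∈ Icc (g b) (g a) := ⟨hy.1.le, hy.2.le⟩
    obtain ⟨x₀, hx₀, hgx₀⟩ := intermediate_value_Icc' hab hcont hy'
    set K : Set ℝ := Icc a b ∩ g ⁻¹' {y} with hK
    have hKne : K.Nonempty := ⟨x₀, hx₀, hgx₀⟩
    have hKclosed : IsClosed K :=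
      hcont.preimage_isClosed_of_isClosed isClosed_Icc isClosed_singleton
    have hKcomp : IsCompact K := isCompact_Icc.of_isClosed_subset hKclosed inter_subset_left
    set c : ℝ := sSup K with hc
    have hcK : c ∈ K := hKcomp.sSup_mem hKne
    have hgc : g c = y := hcK.2
    have hca : a ≤ c := hcK.1.1
    have hcb : c < b := by
      rcases lt_or_eq_of_le hcK.1.2 with h | h
      · exact h
      · exfalso; rw [h] at hgc; exact lt_irrefl y (hgc ▸ hy.1)
    have key : ∀ t ∈ Ioc c b, g t < y := by
      intro t ht
      rcases lt_trichotomy (g t) y with h | h | h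
      · exact h
      · exact absurd (le_csSup hKcomp.bddAbove ⟨⟨hca.trans ht.1.le, ht.2⟩, h⟩) (not_le.2 ht.1)
      · exfalso
        have hyk : y ∈ Icc (g b) (g t) := ⟨hy.1.le, h.le⟩
        obtain ⟨x', hx', hgx'⟩ := intermediate_value_Icc' ht.2
          (hcont.mono (Icc_subset_Icc (hca.trans ht.1.le) le_rfl)) hyk
        have : x' ≤ c := le_csSup hKcomp.bddAbove ⟨⟨hca.trans (ht.1.le.trans hx'.1), hx'.2⟩, hgx'⟩
        exact absurd (ht.1.trans_le hx'.1) (not_lt.2 this)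
    -- the right derivative at c is nonpositive
    have hder : HasDerivWithinAt g (g' c) (Ioc c b) c :=
      (hdiff c hcK.1).mono (fun t ht => ⟨hca.trans ht.1.le, ht.2⟩)
    have hne : (𝓝[Ioc c b] c).NeBot := by
      rw [← mem_closure_iff_nhdsWithin_neBot, closure_Ioc hcb.ne]
      exact ⟨le_rfl, hcb.le⟩
    have hgc_le : g' c ≤ 0 := by
      have hslope := hasDerivWithinAt_iff_tendsto_slope.1 hder
      rw [show Ioc c b \ {c} = Ioc c b by simp] at hslope
      refine le_of_tendsto hslope ?_
      filter_upwards [self_mem_nhdsWithin] with t ht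
      have h1 : g t - g c < 0 := by
        have := key t ht; rw [hgc]; linarith
      have h2 : 0 < t - c := by linarith [ht.1]
      rw [slope_def_field]
      exact div_nonpos_of_nonpos_of_nonneg h1.le h2.le
    by_cases hcE : c ∈ E
    · exact Or.inl ⟨c, ⟨hcE, hcK.1⟩, hgc⟩
    · exact Or.inr ⟨c, ⟨hcK.1, le_antisymm hgc_le (hpos c hcK.1 hcE)⟩, hgc⟩
  have hIoo : volume (Ioo (g b) (g a)) = 0 :=
    measure_mono_null hsub (measure_union_null h1 h2)
  rw [Real.volume_Ioo] at hIoo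
  simp only [ENNReal.ofReal_eq_zero, sub_nonpos] at hIoo
  exact absurd hIoo (not_le.2 hba)

/-- Riccati comparison: if `q₁` is a subsolution and `q₂` a supersolution of the Riccati
equation `q' = q²/v + G` on maximal intervals `[t̄, Tᵢ)` (maximality encoded by blow-up
to `+∞` at `Tᵢ`), with the same initial value at `t̄ > 0`, then `T₁ ≤ T₂` and
`q₁ ≥ q₂` on `[t̄, T₁)`. -/
theorem stmt2 (G v : ℝ → ℝ) (hG : ContinuousOn G (Ici 0)) (hv : ContinuousOn v (Ici 0))
    (hvpos : ∀ t ∈ Ici (0 : ℝ), 0 < v t)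
    (tbar T₁ T₂ : ℝ) (htbar : 0 < tbar) (hT₁ : tbar < T₁) (hT₂ : tbar < T₂)
    (q₁ q₂ d₁ d₂ : ℝ → ℝ)
    (hq₁ : ∀ t ∈ Ico tbar T₁, HasDerivAt q₁ (d₁ t) t)
    (hq₂ : ∀ t ∈ Ico tbar T₂, HasDerivAt q₂ (d₂ t) t)
    (hineq₁ : ∀ᵐ t, t ∈ Ico tbar T₁ → d₁ t - (q₁ t) ^ 2 / v t - G t ≥ 0)
    (hineq₂ : ∀ᵐ t, t ∈ Ico tbar T₂ → d₂ t - (q₂ t) ^ 2 / v t - G t ≤ 0)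
    (hmax₁ : Tendsto q₁ (nhdsWithin T₁ (Iio T₁)) atTop)
    (hmax₂ : Tendsto q₂ (nhdsWithin T₂ (Iio T₂)) atTop)
    (hinit : q₁ tbar = q₂ tbar) :
    T₁ ≤ T₂ ∧ ∀ t ∈ Ico tbar T₁, q₂ t ≤ q₁ t := by
  have key : ∀ b ∈ Ico tbar (min T₁ T₂), q₂ b ≤ q₁ b := by
    intro b hb
    set T := min T₁ T₂ with hT
    have hbT : b < T := hb.2
    have htT : tbar < T := lt_min hT₁ hT₂
    set c : ℝ → ℝ := fun t => (q₁ t + q₂ t) / v t with hc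
    have hcat : ∀ t ∈ Ico tbar T, ContinuousAt c t := by
      intro t ht
      have h0 : (0 : ℝ) < t := htbar.trans_le ht.1
      have hv' : ContinuousAt v t := hv.continuousAt (Ici_mem_nhds h0)
      have h1 : ContinuousAt q₁ t :=
        (hq₁ t ⟨ht.1, ht.2.trans_le (min_le_left _ _)⟩).continuousAt
      have h2 : ContinuousAt q₂ t :=
        (hq₂ t ⟨ht.1, ht.2.trans_le (min_le_right _ _)⟩).continuousAt
      exact (h1.add h2).div hv' (hvpos t h0.le).ne'
    have hcIco : ContinuousOn c (Ico tbar T) := fun t ht => (hcat t ht).continuousWithinAt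
    set C : ℝ → ℝ := fun u => ∫ s in tbar..u, c s with hCdef
    have hCd : ∀ t ∈ Icc tbar b, HasDerivWithinAt C (c t) (Icc tbar b) t := by
      intro t ht
      have hsub : Icc tbar t ⊆ Ico tbar T := fun s hs =>
        ⟨hs.1, lt_of_le_of_lt (hs.2.trans ht.2) hbT⟩
      have hti : IntervalIntegrable c volume tbar t :=
        (hcIco.mono hsub).intervalIntegrable_of_Icc ht.1
      rcases eq_or_lt_of_le ht.1 with rfl | hlt
      · have hmeas : StronglyMeasurableAtFilter c (𝓝[>] tbar) volume :=
          ⟨Ioo tbar T, Ioo_mem_nhdsGT_of_mem ⟨le_rfl, htT⟩,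
            (hcIco.mono Ioo_subset_Ico_self).aestronglyMeasurable measurableSet_Ioo⟩
        exact (integral_hasDerivWithinAt_right (s := Ici tbar) (t := Ioi tbar) hti hmeas
          (hcat tbar ⟨le_rfl, htT⟩).continuousWithinAt).mono Icc_subset_Ici_self
      · have htT' : t < T := lt_of_le_of_lt ht.2 hbT
        have hmeas : StronglyMeasurableAtFilter c (𝓝 t) volume :=
          ⟨Ioo tbar T, Ioo_mem_nhds hlt htT',
            (hcIco.mono Ioo_subset_Ico_self).aestronglyMeasurable measurableSet_Ioo⟩
        exact (integral_hasDerivAt_right hti hmeas (hcat t ⟨hlt.le, htT'⟩)).hasDerivWithinAt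
    set φ : ℝ → ℝ := fun t => (q₁ t - q₂ t) * Real.exp (-(C t)) with hφdef
    set D : ℝ → ℝ := fun t =>
      (d₁ t - d₂ t) * Real.exp (-(C t)) + (q₁ t - q₂ t) * (Real.exp (-(C t)) * -(c t)) with hDdef
    have hφd : ∀ t ∈ Icc tbar b, HasDerivWithinAt φ (D t) (Icc tbar b) t := by
      intro t ht
      have ht1 : t ∈ Ico tbar T₁ := ⟨ht.1, (lt_of_le_of_lt ht.2 hbT).trans_le (min_le_left _ _)⟩
      have ht2 : t ∈ Ico tbar T₂ := ⟨ht.1, (lt_of_le_of_lt ht.2 hbT).trans_le (min_le_right _ _)⟩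
      exact (((hq₁ t ht1).sub (hq₂ t ht2)).hasDerivWithinAt).mul ((hCd t ht).neg).exp
    set Eb : Set ℝ := {t | ¬ ((t ∈ Ico tbar T₁ → d₁ t - q₁ t ^ 2 / v t - G t ≥ 0) ∧
      (t ∈ Ico tbar T₂ → d₂ t - q₂ t ^ 2 / v t - G t ≤ 0))} with hEbdef
    have hEb : volume Eb = 0 := by
      have h := hineq₁.and hineq₂
      rw [ae_iff] at h
      exact h
    have hpos : ∀ t ∈ Icc tbar b, t ∉ Eb → 0 ≤ D t := by
      intro t ht htE
      rw [hEbdef, mem_setOf_eq, not_not] at htE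
      have ht1 : t ∈ Ico tbar T₁ := ⟨ht.1, (lt_of_le_of_lt ht.2 hbT).trans_le (min_le_left _ _)⟩
      have ht2 : t ∈ Ico tbar T₂ := ⟨ht.1, (lt_of_le_of_lt ht.2 hbT).trans_le (min_le_right _ _)⟩
      have h1 := htE.1 ht1
      have h2 := htE.2 ht2
      have hv0 : 0 < v t := hvpos t (htbar.trans_le ht.1).le
      have hcw : c t * (q₁ t - q₂ t) = q₁ t ^ 2 / v t - q₂ t ^ 2 / v t := by
        rw [hc]
        field_simp
        ring
      have hDt : D t = Real.exp (-(C t)) * ((d₁ t - d₂ t) - c t * (q₁ t - q₂ t)) := by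
        rw [hDdef]; ring
      rw [hDt]
      apply mul_nonneg (Real.exp_pos _).le
      rw [hcw] at *
      linarith
    have h0 : φ tbar ≤ φ b := gt_aux hb.1 hφd hEb hpos
    have hφtbar : φ tbar = 0 := by
      rw [hφdef]
      simp [hinit]
    rw [hφtbar] at h0
    have h0' : 0 ≤ (q₁ b - q₂ b) * Real.exp (-(C b)) := h0
    nlinarith [Real.exp_pos (-(C b))]
  have hTle : T₁ ≤ T₂ := by
    by_contra hlt
    push_neg at hlt
    have hmin : min T₁ T₂ = T₂ := min_eq_right hlt.le
    have hq1top : Tendsto q₁ (𝓝[<] T₂) atTop := by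
      apply tendsto_atTop_mono' _ _ hmax₂
      filter_upwards [Ioo_mem_nhdsLT_of_mem (⟨hT₂, le_rfl⟩ : T₂ ∈ Ioc tbar T₂)] with t ht
      exact key t ⟨ht.1.le, by rw [hmin]; exact ht.2⟩
    have hcont : ContinuousAt q₁ T₂ := (hq₁ T₂ ⟨hT₂.le, hlt⟩).continuousAt
    exact not_tendsto_atTop_of_tendsto_nhds (hcont.tendsto.mono_left nhdsWithin_le_nhds) hq1top
  exact ⟨hTle, fun t ht => key t ⟨ht.1, lt_min ht.2 (lt_of_lt_of_le ht.2 hTle)⟩⟩
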